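/- Define b: ℝ → ℝ by b(x) = x · log(1/x) · (log log(1/x) − 1) for 0 < x < e^{−e} and b(x) = 0 otherwise, and for s, t ∈ ℝ and x ∈ (0, e^{−e}) set X(t,s,x) = exp( −e · ((1/e) log(1/x))^{exp(s−t)} ). Then: (i) b is continuous, X(t,s,x) ∈ (0, e^{−e}), X(s,s,x) = x, and ∂_t X(t,s,x) = b(X(t,s,x)) for all t, s ∈ ℝ and x ∈ (0, e^{−e}); (ii) for every t > 0 and every p > 1, ∫_0^{e^{−e}} |∂_x X(t,0,x)|^p dx = +∞. -/

import Mathlib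

open MeasureTheory Real Filter Set

private lemma aux_L {x : ℝ} (hx0 : 0 < x) (hxK : x < Real.exp (-Real.exp 1)) :
    Real.exp 1 < Real.log (1 / x) := by
  rw [one_div, Real.log_inv]
  have h := Real.log_lt_log hx0 hxK
  rw [Real.log_exp] at h
  linarith

private lemma aux_gtendsto :
    Tendsto (fun x : ℝ => x * Real.log (1 / x) * (Real.log (Real.log (1 / x)) - 1))
      (nhdsWithin 0 (Set.Ioi 0)) (nhds 0) := by
  have hL : Tendsto (fun x : ℝ => Real.log (1 / x)) (nhdsWithin 0 (Set.Ioi 0)) atTop := by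
    simp only [one_div, Real.log_inv]
    exact tendsto_neg_atBot_atTop.comp Real.tendsto_log_nhdsGT_zero
  have h2 : Tendsto (fun A : ℝ => A ^ (2:ℕ) * Real.exp (-A)) atTop (nhds 0) :=
    Real.tendsto_pow_mul_exp_neg_atTop_nhds_zero 2
  refine squeeze_zero_norm' ?_ (h2.comp hL)
  have hmem : Set.Ioo (0:ℝ) (Real.exp (-Real.exp 1)) ∈ nhdsWithin (0:ℝ) (Set.Ioi 0) :=
    Ioo_mem_nhdsGT_of_mem ⟨le_refl 0, Real.exp_pos _⟩
  filter_upwards [hmem] with x hx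
  have he1 : (1:ℝ) < Real.exp 1 := by
    have := Real.add_one_le_exp 1; linarith
  have hxe : Real.exp 1 < Real.log (1 / x) := aux_L hx.1 hx.2
  set L := Real.log (1 / x) with hLdef
  have hL1 : (1:ℝ) < L := lt_trans he1 hxe
  have hlogL : 1 < Real.log L := by
    have h := Real.log_lt_log (Real.exp_pos 1) hxe
    rwa [Real.log_exp] at h
  have hxL : x = Real.exp (-L) := by
    rw [hLdef, one_div, Real.log_inv, neg_neg, Real.exp_log hx.1]
  have hlogle : Real.log L ≤ L - 1 := Real.log_le_sub_one_of_pos (by linarith)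
  show ‖x * L * (Real.log L - 1)‖ ≤ L ^ (2:ℕ) * Real.exp (-L)
  have h1 : 0 ≤ x * L := mul_nonneg hx.1.le (by linarith)
  rw [Real.norm_eq_abs, abs_of_nonneg (mul_nonneg h1 (by linarith))]
  rw [hxL]
  calc Real.exp (-L) * L * (Real.log L - 1) ≤ Real.exp (-L) * L * L :=
        mul_le_mul_of_nonneg_left (by linarith) (by positivity)
    _ = L ^ (2:ℕ) * Real.exp (-L) := by ring

private lemma aux_cont (b : ℝ → ℝ)
    (hb : ∀ x : ℝ, b x = if x ∈ Set.Ioo (0:ℝ) (Real.exp (-Real.exp 1)) then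
      x * Real.log (1 / x) * (Real.log (Real.log (1 / x)) - 1) else 0) :
    Continuous b := by
  set K := Real.exp (-Real.exp 1) with hKdef
  have hK0 : 0 < K := Real.exp_pos _
  have hK1 : K < 1 := by
    rw [hKdef]
    calc Real.exp (-Real.exp 1) < Real.exp 0 :=
          Real.exp_lt_exp.mpr (by nlinarith [Real.exp_pos 1])
      _ = 1 := Real.exp_zero
  set g : ℝ → ℝ := fun x => x * Real.log (1 / x) * (Real.log (Real.log (1 / x)) - 1) with hg
  have hlogK : Real.log (1 / K) = Real.exp 1 := by
    rw [hKdef, one_div, Real.log_inv, Real.log_exp, neg_neg]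
  have hgK : g K = 0 := by
    rw [hg]
    simp only
    rw [hlogK, Real.log_exp]
    ring
  have hgcont : ∀ y : ℝ, 0 < y → y < 1 → ContinuousAt g y := by
    intro y hy0 hy1
    have h1y : (1:ℝ) < 1 / y := by
      rw [lt_div_iff₀ hy0]; linarith
    have hlogpos : 0 < Real.log (1 / y) := Real.log_pos h1y
    have c1 : ContinuousAt (fun x : ℝ => 1 / x) y :=
      continuousAt_const.div continuousAt_id (ne_of_gt hy0)
    have c2 : ContinuousAt (fun x : ℝ => Real.log (1 / x)) y :=
      c1.log (by positivity)
    have c3 : ContinuousAt (fun x : ℝ => Real.log (Real.log (1 / x))) y :=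
      c2.log (ne_of_gt hlogpos)
    exact (continuousAt_id.mul c2).mul (c3.sub continuousAt_const)
  rw [continuous_iff_continuousAt]
  intro x₀
  rcases lt_trichotomy x₀ 0 with h0 | h0 | h0
  · refine ContinuousAt.congr (continuousAt_const (y := (0:ℝ))) ?_
    filter_upwards [Iio_mem_nhds h0] with y (hy : y < 0)
    rw [hb y, if_neg (fun hmem => absurd hmem.1 (not_lt.mpr hy.le))]
  · subst h0
    have hb0 : b 0 = 0 := by
      rw [hb 0, if_neg (fun h => lt_irrefl 0 h.1)]
    rw [continuousAt_iff_continuous_left_right]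
    constructor
    · refine ContinuousWithinAt.congr (continuousWithinAt_const (b := (0:ℝ))) (fun y hy => ?_) hb0
      rw [hb y, if_neg (fun h => absurd h.1 (not_lt.mpr hy))]
    · rw [← continuousWithinAt_Ioi_iff_Ici]
      show Tendsto b (nhdsWithin 0 (Set.Ioi 0)) (nhds (b 0))
      rw [hb0]
      refine Filter.Tendsto.congr' ?_ aux_gtendsto
      filter_upwards [Ioo_mem_nhdsGT_of_mem ⟨le_refl (0:ℝ), hK0⟩] with y hy
      rw [hb y, if_pos hy]
  · rcases lt_trichotomy x₀ K with h1 | h1 | h1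
    · refine ContinuousAt.congr (hgcont x₀ h0 (lt_trans h1 hK1)) ?_
      filter_upwards [Ioo_mem_nhds h0 h1] with y hy
      rw [hb y, if_pos hy]
    · subst h1
      have hbK : b K = 0 := by
        rw [hb K, if_neg (fun h => lt_irrefl K h.2)]
      rw [continuousAt_iff_continuous_left_right]
      constructor
      · refine ContinuousWithinAt.congr_of_eventuallyEq
          ((hgcont K hK0 hK1).continuousWithinAt) ?_ (by rw [hbK, hgK])
        filter_upwards [Ioc_mem_nhdsLE_of_mem ⟨hK0, le_refl K⟩] with y hy
        rcases eq_or_lt_of_le hy.2 with h | h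
        · rw [h, hbK, hgK]
        · rw [hb y, if_pos ⟨hy.1, h⟩]
      · refine ContinuousWithinAt.congr (continuousWithinAt_const (b := (0:ℝ))) (fun y hy => ?_) hbK
        rw [hb y, if_neg (fun h => absurd h.2 (not_lt.mpr hy))]
    · refine ContinuousAt.congr (continuousAt_const (y := (0:ℝ))) ?_
      filter_upwards [Ioi_mem_nhds h1] with y (hy : K < y)
      rw [hb y, if_neg (fun h => absurd h.2 (not_lt.mpr hy.le))]

private lemma aux_inv_lintegral {δ : ℝ} (hδ : 0 < δ) :
    ∫⁻ x in Set.Ioo (0:ℝ) δ, ENNReal.ofReal x⁻¹ = ⊤ := by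
  by_contra h
  have hm : AEStronglyMeasurable (fun x : ℝ => x⁻¹) (volume.restrict (Set.Ioo (0:ℝ) δ)) :=
    (measurable_inv.comp measurable_id).aestronglyMeasurable
  have hint : IntegrableOn (fun x : ℝ => x⁻¹) (Set.Ioo (0:ℝ) δ) := by
    refine ⟨hm, ?_⟩
    rw [hasFiniteIntegral_iff_norm]
    have heq : ∀ᵐ x ∂(volume.restrict (Set.Ioo (0:ℝ) δ)),
        ENNReal.ofReal ‖x⁻¹‖ = ENNReal.ofReal x⁻¹ := by
      filter_upwards [ae_restrict_mem measurableSet_Ioo] with x hx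
      rw [Real.norm_eq_abs, abs_of_pos (inv_pos.mpr hx.1)]
    rw [lintegral_congr_ae heq]
    exact lt_top_iff_ne_top.mpr h
  have := (intervalIntegral.integrableOn_Ioo_rpow_iff (s := (-1:ℝ)) hδ).mp
    (hint.congr_fun (fun x hx => by rw [Real.rpow_neg_one]) measurableSet_Ioo)
  linarith

private lemma aux_htendsto {θ p : ℝ} (hθ0 : 0 < θ) (hθ1 : θ < 1) (hp : 1 < p) :
    Tendsto (fun A : ℝ => (p - 1) * Real.exp 1 * A - p * Real.exp 1 * A ^ θ
      - p * (1 - θ) * Real.log A + p * Real.log θ) atTop atTop := by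
  have h1 : Tendsto (fun A : ℝ => A ^ (θ - 1)) atTop (nhds 0) := by
    have h := tendsto_rpow_neg_atTop (y := 1 - θ) (by linarith)
    refine h.congr ?_
    intro A
    rw [neg_sub]
  have h2 : Tendsto (fun A : ℝ => Real.log A / A) atTop (nhds 0) :=
    Real.isLittleO_log_id_atTop.tendsto_div_nhds_zero
  have h3 : Tendsto (fun A : ℝ => (p - 1) * Real.exp 1 - p * Real.exp 1 * A ^ (θ - 1)
      - p * (1 - θ) * (Real.log A / A)) atTop
      (nhds ((p - 1) * Real.exp 1 - p * Real.exp 1 * 0 - p * (1 - θ) * 0)) :=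
    (tendsto_const_nhds.sub (h1.const_mul _)).sub (h2.const_mul _)
  rw [mul_zero, mul_zero, sub_zero, sub_zero] at h3
  have h4 : Tendsto (fun A : ℝ => A * ((p - 1) * Real.exp 1 - p * Real.exp 1 * A ^ (θ - 1)
      - p * (1 - θ) * (Real.log A / A))) atTop atTop :=
    Filter.Tendsto.atTop_mul_pos (by nlinarith [Real.exp_pos 1]) tendsto_id h3
  have h5 := tendsto_atTop_add_const_right atTop (p * Real.log θ) h4
  refine h5.congr' ?_
  filter_upwards [eventually_gt_atTop (0:ℝ)] with A hA
  have hA1 : A ^ (θ - 1) = A ^ θ / A := by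
    rw [Real.rpow_sub hA, Real.rpow_one]
  rw [hA1]
  field_simp

theorem stmt_15 (b : ℝ → ℝ)
    (hb : ∀ x : ℝ, b x = if x ∈ Set.Ioo (0:ℝ) (Real.exp (-Real.exp 1)) then
      x * Real.log (1 / x) * (Real.log (Real.log (1 / x)) - 1) else 0)
    (X : ℝ → ℝ → ℝ → ℝ)
    (hX : ∀ t s x : ℝ, X t s x =
      Real.exp (-(Real.exp 1) * ((1 / Real.exp 1) * Real.log (1 / x)) ^ Real.exp (s - t))) :
    Continuous b ∧
    (∀ t s : ℝ, ∀ x ∈ Set.Ioo (0:ℝ) (Real.exp (-Real.exp 1)),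
      X t s x ∈ Set.Ioo (0:ℝ) (Real.exp (-Real.exp 1)) ∧
      X s s x = x ∧
      HasDerivAt (fun τ => X τ s x) (b (X t s x)) t) ∧
    (∀ t : ℝ, 0 < t → ∀ p : ℝ, 1 < p →
      ∫⁻ x in Set.Ioo (0:ℝ) (Real.exp (-Real.exp 1)),
        ENNReal.ofReal (|deriv (fun y => X t 0 y) x| ^ p) = ⊤) := by
  refine ⟨aux_cont b hb, ?_, ?_⟩
  · intro t s x hx
    obtain ⟨hx0, hxK⟩ := hx
    have he0 : (0:ℝ) < Real.exp 1 := Real.exp_pos 1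
    have hL : Real.exp 1 < Real.log (1 / x) := aux_L hx0 hxK
    set A : ℝ := (1 / Real.exp 1) * Real.log (1 / x) with hAdef
    have hA1 : 1 < A := by
      rw [hAdef, one_div]
      have hinv : (Real.exp 1)⁻¹ * Real.exp 1 = 1 := inv_mul_cancel₀ (ne_of_gt he0)
      nlinarith [inv_pos.mpr he0]
    have hA0 : (0:ℝ) < A := by linarith
    have hXval : ∀ τ : ℝ, X τ s x = Real.exp (-(Real.exp 1) * A ^ Real.exp (s - τ)) :=
      fun τ => hX τ s x
    have hE : (0:ℝ) < Real.exp (s - t) := Real.exp_pos _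
    have hrpow : 1 < A ^ Real.exp (s - t) :=
      (Real.one_lt_rpow_iff_of_pos hA0).mpr (Or.inl ⟨hA1, hE⟩)
    have hmem : X t s x ∈ Set.Ioo (0:ℝ) (Real.exp (-Real.exp 1)) := by
      rw [hXval t]
      exact ⟨Real.exp_pos _, Real.exp_lt_exp.mpr (by nlinarith)⟩
    refine ⟨hmem, ?_, ?_⟩
    · rw [hXval s, sub_self, Real.exp_zero, Real.rpow_one, hAdef,
        show -Real.exp 1 * (1 / Real.exp 1 * Real.log (1 / x)) = -Real.log (1 / x) by
          field_simp [mul_comm],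
        one_div, Real.log_inv, neg_neg, Real.exp_log hx0]
    · have hd1 : HasDerivAt (fun τ : ℝ => s - τ) (-1) t := by
        simpa using (hasDerivAt_id t).const_sub s
      have hd2 : HasDerivAt (fun τ : ℝ => Real.exp (s - τ)) (Real.exp (s - t) * (-1)) t :=
        hd1.exp
      have hd3 : HasDerivAt (fun r : ℝ => A ^ r)
          (A ^ Real.exp (s - t) * Real.log A) (Real.exp (s - t)) :=
        (Real.hasStrictDerivAt_const_rpow hA0 _).hasDerivAt
      have hd4 : HasDerivAt (fun τ : ℝ => A ^ Real.exp (s - τ))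
          (A ^ Real.exp (s - t) * Real.log A * (Real.exp (s - t) * (-1))) t :=
        hd3.comp t hd2
      have hd5 := (hd4.const_mul (-(Real.exp 1))).exp
      have hbval : b (X t s x) = Real.exp (-(Real.exp 1) * A ^ Real.exp (s - t)) *
          (-(Real.exp 1) * (A ^ Real.exp (s - t) * Real.log A * (Real.exp (s - t) * (-1)))) := by
        rw [hb (X t s x), if_pos hmem, hXval t]
        rw [show (1 : ℝ) / Real.exp (-(Real.exp 1) * A ^ Real.exp (s - t)) =
            Real.exp (Real.exp 1 * A ^ Real.exp (s - t)) by
          rw [one_div, ← Real.exp_neg]; ring_nf]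
        rw [Real.log_exp]
        rw [Real.log_mul (ne_of_gt he0) (ne_of_gt (by positivity)), Real.log_exp,
          Real.log_rpow hA0]
        ring
      have hfun : (fun τ => X τ s x) =
          fun τ => Real.exp (-(Real.exp 1) * A ^ Real.exp (s - τ)) := funext fun τ => hXval τ
      rw [hfun, hbval]
      exact hd5
  · intro t ht p hp
    have he0 : (0:ℝ) < Real.exp 1 := Real.exp_pos 1
    set θ : ℝ := Real.exp (0 - t) with hθdef
    have hθ0 : 0 < θ := Real.exp_pos _
    have hθ1 : θ < 1 := by
      rw [hθdef, show (1:ℝ) = Real.exp 0 from (Real.exp_zero).symm]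
      exact Real.exp_lt_exp.mpr (by linarith)
    obtain ⟨A₀, hA₀⟩ := eventually_atTop.mp
      (((aux_htendsto hθ0 hθ1 hp).eventually_ge_atTop 0).and (eventually_gt_atTop 1))
    have hA₀1 : 1 < A₀ := (hA₀ A₀ le_rfl).2
    set δ : ℝ := Real.exp (-(Real.exp 1 * A₀)) with hδdef
    have hδ0 : 0 < δ := Real.exp_pos _
    have hδK : δ < Real.exp (-Real.exp 1) :=
      Real.exp_lt_exp.mpr (by nlinarith)
    have key : ∀ x ∈ Set.Ioo (0:ℝ) δ,
        ENNReal.ofReal x⁻¹ ≤ ENNReal.ofReal (|deriv (fun y => X t 0 y) x| ^ p) := by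
      intro x hx
      obtain ⟨hx0, hxδ⟩ := hx
      set A : ℝ := (Real.exp 1)⁻¹ * (-Real.log x) with hAdef
      have hlogx : Real.log x < -(Real.exp 1 * A₀) := by
        calc Real.log x < Real.log δ := Real.log_lt_log hx0 hxδ
          _ = -(Real.exp 1 * A₀) := by rw [hδdef, Real.log_exp]
      have hAA₀ : A₀ < A := by
        rw [hAdef]
        have hinv : (Real.exp 1)⁻¹ * Real.exp 1 = 1 := inv_mul_cancel₀ (ne_of_gt he0)
        nlinarith [inv_pos.mpr he0]
      have hA1 : 1 < A := lt_trans hA₀1 hAA₀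
      have hA0 : (0:ℝ) < A := by linarith
      obtain ⟨hh, -⟩ := hA₀ A (le_of_lt hAA₀)
      have hlogxA : Real.log x = -(Real.exp 1 * A) := by
        rw [hAdef]
        field_simp
      have hxinv : x⁻¹ = Real.exp (Real.exp 1 * A) := by
        rw [← Real.exp_log hx0, hlogxA, Real.exp_neg, inv_inv]
      -- derivative of f
      have hfun : (fun y => X t 0 y) =
          fun y => Real.exp (-(Real.exp 1) * ((Real.exp 1)⁻¹ * (-Real.log y)) ^ θ) := by
        funext y
        rw [hX t 0 y, ← hθdef]
        simp only [one_div, Real.log_inv]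
      have hc1 : HasDerivAt (fun y : ℝ => (Real.exp 1)⁻¹ * (-Real.log y))
          ((Real.exp 1)⁻¹ * (-x⁻¹)) x :=
        ((Real.hasDerivAt_log (ne_of_gt hx0)).neg).const_mul _
      have hc2 : HasDerivAt (fun u : ℝ => u ^ θ) (θ * A ^ (θ - 1)) A :=
        Real.hasDerivAt_rpow_const (Or.inl (ne_of_gt hA0))
      have hc3 : HasDerivAt (fun y : ℝ => ((Real.exp 1)⁻¹ * (-Real.log y)) ^ θ)
          (θ * A ^ (θ - 1) * ((Real.exp 1)⁻¹ * (-x⁻¹))) x := by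
          have hc2' : HasDerivAt (fun u : ℝ => u ^ θ) (θ * A ^ (θ - 1))
              ((fun y : ℝ => (Real.exp 1)⁻¹ * (-Real.log y)) x) := hc2
          exact hc2'.comp x hc1
      have hc4 := (hc3.const_mul (-(Real.exp 1))).exp
      have hderiv : deriv (fun y => X t 0 y) x =
          Real.exp (-(Real.exp 1) * A ^ θ) * θ * A ^ (θ - 1) * x⁻¹ := by
        rw [hfun, hc4.deriv, ← hAdef]
        field_simp
      set d : ℝ := Real.exp (-(Real.exp 1) * A ^ θ) * θ * A ^ (θ - 1) * x⁻¹ with hddef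
      have hd0 : 0 < d := by
        rw [hddef]
        have : (0:ℝ) < A ^ (θ - 1) := Real.rpow_pos_of_pos hA0 _
        positivity
      have hlogd : Real.log d = -(Real.exp 1) * A ^ θ + Real.log θ
          + (θ - 1) * Real.log A + Real.exp 1 * A := by
        rw [hddef, Real.log_mul (by positivity) (by positivity),
          Real.log_mul (by positivity) (by positivity),
          Real.log_mul (by positivity) (by positivity),
          Real.log_exp, Real.log_rpow hA0, hxinv, Real.log_exp, Real.log_exp]
      have hkey : x⁻¹ ≤ d ^ p := by
        rw [hxinv, Real.rpow_def_of_pos hd0, hlogd]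
        apply Real.exp_le_exp.mpr
        nlinarith [hh]
      rw [hderiv, abs_of_pos hd0]
      exact ENNReal.ofReal_le_ofReal hkey
    have h1 : (⊤ : ENNReal) ≤
        ∫⁻ x in Set.Ioo (0:ℝ) δ, ENNReal.ofReal (|deriv (fun y => X t 0 y) x| ^ p) := by
      rw [← aux_inv_lintegral hδ0]
      apply MeasureTheory.lintegral_mono_ae
      filter_upwards [ae_restrict_mem measurableSet_Ioo] with x hx
      exact key x hx
    have h2 : (∫⁻ x in Set.Ioo (0:ℝ) δ, ENNReal.ofReal (|deriv (fun y => X t 0 y) x| ^ p)) ≤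
        ∫⁻ x in Set.Ioo (0:ℝ) (Real.exp (-Real.exp 1)),
          ENNReal.ofReal (|deriv (fun y => X t 0 y) x| ^ p) :=
      lintegral_mono' (Measure.restrict_mono (Set.Ioo_subset_Ioo le_rfl hδK.le) le_rfl) le_rfl
    exact top_le_iff.mp (le_trans h1 h2)
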